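/- Fix constants d, f ∈ ℝ and define g₊ : ℝ → ℝ by g₊(t) = f(t log|t| - (t-1) log|t-1|) for t ≤ 0 and g₊(t) = d·min(1,t) + f(t log|t| - (t-1) log|t-1|) for t > 0 (with the convention 0·log 0 = 0). Then g₊ satisfies, for all t ∈ ℝ and all T > 0: g₊(t) = (T+1) g₊((T+t)/(T+1)) - T g₊((T+t)/T) - (T+1) g₊(T/(T+1)) + T g₊(1). -/

import Mathlib

lemma key1 (x y : ℝ) (hy : 0 < y) :
    y * ((x / y) * Real.log |x / y|) = x * Real.log |x| - x * Real.log y := by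
  rcases eq_or_ne x 0 with rfl | hx
  · simp
  · have h : Real.log |x / y| = Real.log |x| - Real.log y := by
      rw [abs_div, abs_of_pos hy, Real.log_div (abs_ne_zero.2 hx) hy.ne']
    rw [h]
    field_simp

lemma keyL (x y : ℝ) (hy : 0 < y) :
    y * (x / y * Real.log |x / y| - (x / y - 1) * Real.log |x / y - 1|) =
      x * Real.log |x| - (x - y) * Real.log |x - y| - y * Real.log y := by
  have h1 := key1 x y hy
  have h2 := key1 (x - y) y hy
  have hxy : x / y - 1 = (x - y) / y := by field_simp
  rw [mul_sub, hxy, h1, h2]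
  ring

lemma Lid (t T : ℝ) (hT : 0 < T) :
    t * Real.log |t| - (t - 1) * Real.log |t - 1| =
      (T + 1) * ((T + t) / (T + 1) * Real.log |(T + t) / (T + 1)| -
        ((T + t) / (T + 1) - 1) * Real.log |(T + t) / (T + 1) - 1|)
      - T * ((T + t) / T * Real.log |(T + t) / T| -
        ((T + t) / T - 1) * Real.log |(T + t) / T - 1|)
      - (T + 1) * (T / (T + 1) * Real.log |T / (T + 1)| -
        (T / (T + 1) - 1) * Real.log |T / (T + 1) - 1|) := by
  have hT1 : (0:ℝ) < T + 1 := by linarith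
  have h1 := keyL (T + t) (T + 1) hT1
  have h2 := keyL (T + t) T hT
  have h3 := keyL T (T + 1) hT1
  rw [show T + t - (T + 1) = t - 1 from by ring] at h1
  rw [show T + t - T = t from by ring] at h2
  rw [show T - (T + 1) = (-1 : ℝ) from by ring, abs_of_pos hT, abs_neg, abs_one,
    Real.log_one, mul_zero] at h3
  linear_combination h2 + h3 - h1

/-- The piecewise function g₊ (case 2H = 1, with the convention 0·log 0 = 0)
satisfies g₊(t) = (T+1) g₊((T+t)/(T+1)) - T g₊((T+t)/T) - (T+1) g₊(T/(T+1)) + T g₊(1)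
for all t ∈ ℝ, T > 0. -/
theorem gplus_solves_equation_half (d f : ℝ) (g : ℝ → ℝ)
    (hg : ∀ t : ℝ, g t =
      if t ≤ 0 then f * (t * Real.log |t| - (t - 1) * Real.log |t - 1|)
      else d * min 1 t + f * (t * Real.log |t| - (t - 1) * Real.log |t - 1|)) :
    ∀ t : ℝ, ∀ T : ℝ, 0 < T →
      g t = (T + 1) * g ((T + t) / (T + 1)) - T * g ((T + t) / T)
            - (T + 1) * g (T / (T + 1)) + T * g 1 := by
  intro t T hT
  have hT1 : (0:ℝ) < T + 1 := by linarith
  have hL := Lid t T hT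
  have hg1 : g 1 = d := by
    rw [hg 1]
    norm_num
  have hgc : g (T / (T + 1)) = d * (T / (T + 1)) +
      f * (T / (T + 1) * Real.log |T / (T + 1)| -
        (T / (T + 1) - 1) * Real.log |T / (T + 1) - 1|) := by
    rw [hg (T / (T + 1)), if_neg (not_le.2 (div_pos hT hT1)),
      min_eq_right ((div_le_one hT1).2 (by linarith))]
  rw [hg t, hg ((T + t) / (T + 1)), hg ((T + t) / T), hgc, hg1]
  rcases le_or_gt (T + t) 0 with hTt | hTt
  · have ht : t ≤ 0 := by linarith
    have ha : (T + t) / (T + 1) ≤ 0 := div_nonpos_of_nonpos_of_nonneg hTt hT1.le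
    have hb : (T + t) / T ≤ 0 := div_nonpos_of_nonpos_of_nonneg hTt hT.le
    rw [if_pos ht, if_pos ha, if_pos hb, hL]
    field_simp
    ring
  · have ha : ¬((T + t) / (T + 1) ≤ 0) := not_le.2 (div_pos hTt hT1)
    have hb : ¬((T + t) / T ≤ 0) := not_le.2 (div_pos hTt hT)
    rcases le_or_gt t 0 with ht | ht
    · rw [if_pos ht, if_neg ha, if_neg hb,
        min_eq_right ((div_le_one hT1).2 (by linarith)),
        min_eq_right ((div_le_one hT).2 (by linarith)), hL]
      field_simp
      ring
    · rw [if_neg (not_le.2 ht), if_neg ha, if_neg hb,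
        min_eq_left ((one_le_div hT).2 (by linarith)), hL]
      rcases le_or_gt t 1 with ht1 | ht1
      · rw [min_eq_right ht1,
          min_eq_right ((div_le_one hT1).2 (by linarith))]
        field_simp
        ring
      · rw [min_eq_left ht1.le,
          min_eq_left ((one_le_div hT1).2 (by linarith))]
        field_simp
        ring
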